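/- Let V₁, V₂ be subspaces of ℂ^n and W = V₂ ∩ V₁^⊥. Then Π_{V₂}^⊥ ∘ Π_{V₁} + Π_{V₂} ∘ Π_{V₁}^⊥ = Π_{V₂ ∩ W^⊥}^⊥ ∘ Π_{W ⊕ V₁} + Π_{V₂ ∩ W^⊥} ∘ Π_{W ⊕ V₁}^⊥. -/

import Mathlib

noncomputable def projc {n : ℕ} (V : Submodule ℂ (EuclideanSpace ℂ (Fin n))) :
    EuclideanSpace ℂ (Fin n) →L[ℂ] EuclideanSpace ℂ (Fin n) :=
  V.subtypeL.comp V.orthogonalProjectionOnto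

lemma projc_apply {n : ℕ} (V : Submodule ℂ (EuclideanSpace ℂ (Fin n)))
    (x : EuclideanSpace ℂ (Fin n)) : projc V x = (V.orthogonalProjectionOnto x : _) := rfl

lemma projc_mem {n : ℕ} (V : Submodule ℂ (EuclideanSpace ℂ (Fin n)))
    (x : EuclideanSpace ℂ (Fin n)) : projc V x ∈ V := (V.orthogonalProjectionOnto x).2

lemma projc_comp_of_le {n : ℕ} {U V : Submodule ℂ (EuclideanSpace ℂ (Fin n))}
    (h : U ≤ V) : projc V * projc U = projc U :=
  ContinuousLinearMap.ext fun x =>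
    Submodule.starProjection_eq_self_iff.mpr (h (projc_mem U x))

lemma projc_comp_ortho {n : ℕ} {U V : Submodule ℂ (EuclideanSpace ℂ (Fin n))}
    (h : U ⟂ V) : projc U * projc V = 0 := by
  refine ContinuousLinearMap.ext fun x => ?_
  have h0 : projc V x ∈ Uᗮ := h.symm (projc_mem V x)
  show (projc U) (projc V x) = 0
  rw [projc_apply, Submodule.orthogonalProjectionOnto_apply_of_mem_orthogonal h0,
    Submodule.coe_zero]

lemma projc_sup {n : ℕ} {U V : Submodule ℂ (EuclideanSpace ℂ (Fin n))}
    (h : U ⟂ V) : projc (U ⊔ V) = projc U + projc V := by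
  refine ContinuousLinearMap.ext fun x => ?_
  have hmem : projc U x + projc V x ∈ U ⊔ V :=
    Submodule.mem_sup.mpr ⟨_, projc_mem U x, _, projc_mem V x, rfl⟩
  have hU : x - (projc U x + projc V x) ∈ Uᗮ := by
    have h1 : x - projc U x ∈ Uᗮ := Submodule.sub_starProjection_mem_orthogonal x
    have h2 : projc V x ∈ Uᗮ := h.symm (projc_mem V x)
    have := Uᗮ.sub_mem h1 h2
    simpa [sub_sub] using this
  have hV : x - (projc U x + projc V x) ∈ Vᗮ := by
    have h1 : x - projc V x ∈ Vᗮ := Submodule.sub_starProjection_mem_orthogonal x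
    have h2 : projc U x ∈ Vᗮ := h (projc_mem U x)
    have := Vᗮ.sub_mem h1 h2
    rwa [sub_sub, add_comm (projc V x)] at this
  have ho : x - (projc U x + projc V x) ∈ (U ⊔ V)ᗮ := by
    rw [← Submodule.inf_orthogonal]
    exact ⟨hU, hV⟩
  exact Submodule.eq_starProjection_of_mem_orthogonal hmem ho

theorem proj_mixed_comp_eq {n : ℕ} (V₁ V₂ : Submodule ℂ (EuclideanSpace ℂ (Fin n))) :
    (1 - projc V₂).comp (projc V₁) + (projc V₂).comp (1 - projc V₁)
      = (1 - projc (V₂ ⊓ (V₂ ⊓ V₁ᗮ)ᗮ)).comp (projc ((V₂ ⊓ V₁ᗮ) ⊔ V₁))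
        + (projc (V₂ ⊓ (V₂ ⊓ V₁ᗮ)ᗮ)).comp (1 - projc ((V₂ ⊓ V₁ᗮ) ⊔ V₁)) := by
  set W := V₂ ⊓ V₁ᗮ with hW
  have hWV₂ : W ≤ V₂ := inf_le_left
  have hWV₁ : W ⟂ V₁ := inf_le_right
  have hWo : W ⟂ (Wᗮ ⊓ V₂) :=
    (Submodule.isOrtho_orthogonal_right W).mono_right inf_le_left
  -- decomposition of V₂
  have hdec : W ⊔ (Wᗮ ⊓ V₂) = V₂ := Submodule.sup_orthogonal_inf_of_hasOrthogonalProjection hWV₂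
  have hinf : V₂ ⊓ Wᗮ = Wᗮ ⊓ V₂ := inf_comm _ _
  have hQ : projc V₂ = projc W + projc (V₂ ⊓ Wᗮ) := by
    have h2 := projc_sup hWo
    rw [hdec] at h2
    rw [h2, hinf]
  have hP' : projc (W ⊔ V₁) = projc W + projc V₁ := projc_sup hWV₁
  set P := projc V₁
  set Q := projc V₂
  set R := projc W
  set Q' := projc (V₂ ⊓ Wᗮ)
  have hQ'eq : Q' = Q - R := by rw [hQ]; abel
  have hQR : Q * R = R := projc_comp_of_le hWV₂
  have hRR : R * R = R := projc_comp_of_le le_rfl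
  have hRP : R * P = 0 := projc_comp_ortho hWV₁
  have key : Q' * (R + P) = Q * P := by
    rw [hQ'eq, sub_mul, mul_add, mul_add, hQR, hRR, hRP]
    abel
  have main : (1 - Q) * P + Q * (1 - P) = (1 - Q') * (R + P) + Q' * (1 - (R + P)) := by
    simp only [sub_mul, mul_sub, one_mul, mul_one]
    rw [key, hQ'eq]
    abel
  show (1 - Q) * P + Q * (1 - P)
      = (1 - Q') * projc (W ⊔ V₁) + Q' * (1 - projc (W ⊔ V₁))
  rw [hP']
  exact main
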